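/- Let d > 0, α > 0, β > 1 and γ > 0 satisfy γ·(β−1) > 1. Then there exists c⋆ > 0 such that for every wave speed c ≥ c⋆ there is no bounded wave profile emanating from the origin with a positive predator component: there exists no wave profile (u, v) with u, v, u', v' bounded on ℝ, u(s) ≥ 0 and v(s) ≥ 0 for all s ∈ ℝ, v(s₀) > 0 for some s₀ ∈ ℝ, and (u(s), v(s), u'(s), v'(s)) → (0, 0, 0, 0) as s → −∞. -/

import Mathlib

open Filter

/-- Exponential growth lemma: a bounded differentiable function satisfying
`b * f ≤ f'` on `[s₂, ∞)` with `b > 0` cannot be positive at `s₂`. -/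
lemma gron_fwd (f : ℝ → ℝ) (b K s₂ : ℝ) (hb : 0 < b) (hf : Differentiable ℝ f)
    (hbd : ∀ s, |f s| ≤ K) (hineq : ∀ s, s₂ ≤ s → b * f s ≤ deriv f s)
    (hpos : 0 < f s₂) : False := by
  set g : ℝ → ℝ := fun s => Real.exp (-b * s) * f s with hg
  have hexp : ∀ s : ℝ, HasDerivAt (fun t => Real.exp (-b * t)) (Real.exp (-b * s) * (-b)) s := by
    intro s
    have h1 : HasDerivAt (fun t : ℝ => -b * t) (-b) s := by
      simpa using (hasDerivAt_id s).const_mul (-b)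
    exact (Real.hasDerivAt_exp (-b * s)).comp s h1
  have hgd : ∀ s, HasDerivAt g (Real.exp (-b * s) * (deriv f s - b * f s)) s := by
    intro s
    have := (hexp s).mul (hf s).hasDerivAt
    exact this.congr_deriv (by ring)
  have hmono : MonotoneOn g (Set.Ici s₂) := by
    apply monotoneOn_of_deriv_nonneg (convex_Ici s₂)
      (fun s _ => ((hgd s).continuousAt.continuousWithinAt))
      (fun s _ => ((hgd s).differentiableAt.differentiableWithinAt))
    intro x hx
    rw [(hgd x).deriv]
    have hxs : s₂ ≤ x := le_of_lt (by simpa using hx)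
    have h2 := hineq x hxs
    have h3 : 0 ≤ deriv f x - b * f x := by linarith
    positivity
  have hK0 : 0 < K := lt_of_lt_of_le hpos (le_trans (le_abs_self _) (hbd s₂))
  obtain ⟨s₃, hs₃⟩ : ∃ x : ℝ, x = s₂ + (K + 1) / (b * f s₂) := ⟨_, rfl⟩
  have hdnn : 0 ≤ (K + 1) / (b * f s₂) := by positivity
  have hle : s₂ ≤ s₃ := by rw [hs₃]; linarith
  have h1 : g s₂ ≤ g s₃ := hmono Set.self_mem_Ici hle hle
  have h2 : Real.exp (b * s₃) * (Real.exp (-b * s₂) * f s₂) ≤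
      Real.exp (b * s₃) * (Real.exp (-b * s₃) * f s₃) :=
    mul_le_mul_of_nonneg_left h1 (Real.exp_pos _).le
  have h3 : Real.exp (b * (s₃ - s₂)) * f s₂ ≤ f s₃ := by
    calc Real.exp (b * (s₃ - s₂)) * f s₂
        = Real.exp (b * s₃) * (Real.exp (-b * s₂) * f s₂) := by
          rw [← mul_assoc, ← Real.exp_add]; ring_nf
      _ ≤ Real.exp (b * s₃) * (Real.exp (-b * s₃) * f s₃) := h2
      _ = f s₃ := by rw [← mul_assoc, ← Real.exp_add]; ring_nf; simp
  have h4 : (b * (s₃ - s₂) + 1) * f s₂ ≤ Real.exp (b * (s₃ - s₂)) * f s₂ :=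
    mul_le_mul_of_nonneg_right (Real.add_one_le_exp _) hpos.le
  have hsub : s₃ - s₂ = (K + 1) / (b * f s₂) := by rw [hs₃]; ring
  have h5 : b * (s₃ - s₂) * f s₂ = K + 1 := by
    rw [hsub]
    field_simp
  have h6 : f s₃ ≤ K := le_trans (le_abs_self _) (hbd s₃)
  nlinarith [h3, h4, h5, h6]

/-- Backward version: a bounded differentiable function satisfying
`ρ * f ≤ f'` on `(-∞, T]` with `ρ < 0` must be nonnegative at `T`. -/
lemma gron_bwd (f : ℝ → ℝ) (ρ K T : ℝ) (hρ : ρ < 0) (hf : Differentiable ℝ f)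
    (hbd : ∀ s, |f s| ≤ K) (hineq : ∀ s, s ≤ T → ρ * f s ≤ deriv f s) : 0 ≤ f T := by
  by_contra h
  push_neg at h
  set F : ℝ → ℝ := fun s => -f (2 * T - s) with hF
  have hlin : ∀ s : ℝ, HasDerivAt (fun t : ℝ => 2 * T - t) (-1) s := by
    intro s
    exact (hasDerivAt_id s).const_sub (2 * T)
  have hFd : ∀ s, HasDerivAt F (deriv f (2 * T - s)) s := by
    intro s
    have h1 : HasDerivAt (fun t => f (2 * T - t)) (deriv f (2 * T - s) * (-1)) s :=
      (hf (2 * T - s)).hasDerivAt.comp s (hlin s)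
    have := h1.neg
    exact this.congr_deriv (by ring)
  have hFT : 0 < F T := by
    simp only [hF]
    rw [show 2 * T - T = T by ring]
    linarith
  refine gron_fwd F (-ρ) K T (by linarith) (fun s => (hFd s).differentiableAt)
    (fun s => by simp only [hF]; rw [abs_neg]; exact hbd _) ?_ hFT
  intro s hs
  rw [(hFd s).deriv]
  have := hineq (2 * T - s) (by linarith)
  simp only [hF]
  linarith

set_option maxHeartbeats 1000000 in
/-- Diffusive Rosenzweig–MacArthur model: if `γ(β-1) > 1`, then for all large
enough wave speeds `c` there is no bounded nonnegative wave profile with a positive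
predator component emanating from the origin (i.e. with
`(u, v, u', v') → (0,0,0,0)` as `s → -∞`). -/
theorem no_bounded_wave_from_origin (d α β γ : ℝ)
    (hd : 0 < d) (hα : 0 < α) (hβ : 1 < β) (hγ : 0 < γ)
    (h1 : 1 < γ * (β - 1)) :
    ∃ cstar > (0 : ℝ), ∀ c ≥ cstar,
      ¬ ∃ u v : ℝ → ℝ, ContDiff ℝ 2 u ∧ ContDiff ℝ 2 v ∧
        (∀ s : ℝ,
          c * deriv u s =
            d * deriv (deriv u) s + α * u s * (γ - u s) - u s * v s / (1 + u s) ∧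
          c * deriv v s =
            deriv (deriv v) s - v s + β * u s * v s / (1 + u s)) ∧
        (∃ M : ℝ, ∀ s : ℝ,
          |u s| ≤ M ∧ |v s| ≤ M ∧ |deriv u s| ≤ M ∧ |deriv v s| ≤ M) ∧
        (∀ s : ℝ, 0 ≤ u s ∧ 0 ≤ v s) ∧
        (∃ s₀ : ℝ, 0 < v s₀) ∧
        Tendsto (fun s => (u s, v s, deriv u s, deriv v s)) atBot
          (nhds ((0, 0, 0, 0) : ℝ × ℝ × ℝ × ℝ)) := by
  have hβ0 : (0:ℝ) < β := lt_trans one_pos hβ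
  refine ⟨2 * Real.sqrt β + 1, by positivity, ?_⟩
  intro c hc
  rintro ⟨u, v, hu2, hv2, heq, ⟨M, hM⟩, hnn, ⟨s₀, hs₀⟩, hlim⟩
  have hsq : Real.sqrt β ^ 2 = β := Real.sq_sqrt hβ0.le
  have hsqnn : 0 ≤ Real.sqrt β := Real.sqrt_nonneg β
  have hc1 : 1 ≤ c := by nlinarith
  have hc0 : (0:ℝ) < c := by linarith
  have hc4 : 4 * β ≤ c ^ 2 := by nlinarith
  have hM0 : (0:ℝ) ≤ M := le_trans (abs_nonneg _) (hM 0).1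
  have h1u : ∀ s, (0:ℝ) < 1 + u s := fun s => by linarith [(hnn s).1]
  -- the v equation
  have hv'' : ∀ s, deriv (deriv v) s
      = c * deriv v s + v s - β * u s * v s / (1 + u s) := fun s => by
    have := (heq s).2; linarith
  have hq0 : ∀ s, 0 ≤ β * u s * v s / (1 + u s) := fun s =>
    div_nonneg (mul_nonneg (mul_nonneg hβ0.le (hnn s).1) (hnn s).2) (h1u s).le
  have hqβ : ∀ s, β * u s * v s / (1 + u s) ≤ β * v s := fun s => by
    rw [div_le_iff₀ (h1u s)]
    nlinarith [(hnn s).1, (hnn s).2]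
  -- differentiability of deriv v
  have hvd : Differentiable ℝ v := hv2.differentiable (by norm_num)
  have hv'd : Differentiable ℝ (deriv v) := by
    have h := (contDiff_succ_iff_deriv.mp
      (show ContDiff ℝ ((1:ℕ) + 1) v by exact_mod_cast hv2)).2.2
    exact h.differentiable (by norm_num)
  -- bounds
  have hvb : ∀ s, |v s| ≤ M := fun s => (hM s).2.1
  have hv'b : ∀ s, |deriv v s| ≤ M := fun s => (hM s).2.2.2
  ------------------------------------------------------------------
  -- Step 1: η := v' - (c/2) v satisfies η' ≥ (c/2) η, hence η ≤ 0.
  set η : ℝ → ℝ := fun s => deriv v s - c / 2 * v s with hη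
  have hηd : Differentiable ℝ η := hv'd.sub (hvd.const_mul _)
  have hηderiv : ∀ s, deriv η s = deriv (deriv v) s - c / 2 * deriv v s := fun s => by
    rw [hη]
    rw [deriv_fun_sub (hv'd s) ((hvd s).const_mul _), deriv_const_mul _ (hvd s)]
  have hηbd : ∀ s, |η s| ≤ M + c / 2 * M := fun s => by
    have h1 : |η s| ≤ |deriv v s| + |c / 2 * v s| := by
      rw [hη]; exact abs_sub _ _
    have h2 : |c / 2 * v s| = c / 2 * |v s| := by
      rw [abs_mul, abs_of_pos (by linarith : (0:ℝ) < c / 2)]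
    nlinarith [hvb s, hv'b s, abs_nonneg (v s)]
  have hηineq : ∀ s, c / 2 * η s ≤ deriv η s := fun s => by
    rw [hηderiv s, hv'' s, hη]
    have h2 := hqβ s
    have h3 := (hnn s).2
    nlinarith [mul_nonneg h3 (by nlinarith : (0:ℝ) ≤ c ^ 2 / 4 - β)]
  have hηle : ∀ s, η s ≤ 0 := fun s => by
    by_contra h
    push_neg at h
    exact gron_fwd η (c / 2) (M + c / 2 * M) s (by linarith) hηd hηbd
      (fun t _ => hηineq t) h
  ------------------------------------------------------------------
  -- Step 2: e^{-(c/2)s} v is antitone, hence v > 0 on (-∞, s₀].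
  have hvpos : ∀ s ≤ s₀, 0 < v s := by
    intro s hs
    set w : ℝ → ℝ := fun t => Real.exp (-(c / 2) * t) * v t with hw
    have hexp : ∀ t : ℝ, HasDerivAt (fun r => Real.exp (-(c / 2) * r))
        (Real.exp (-(c / 2) * t) * (-(c / 2))) t := fun t => by
      have h1 : HasDerivAt (fun r : ℝ => -(c / 2) * r) (-(c / 2)) t := by
        simpa using (hasDerivAt_id t).const_mul (-(c / 2))
      exact (Real.hasDerivAt_exp _).comp t h1
    have hwd : ∀ t, HasDerivAt w (Real.exp (-(c / 2) * t) * η t) t := fun t => by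
      have := (hexp t).mul (hvd t).hasDerivAt
      exact this.congr_deriv (by simp only [hη]; ring)
    have hanti : Antitone w := by
      apply antitone_of_deriv_nonpos (fun t => (hwd t).differentiableAt)
      intro t
      rw [(hwd t).deriv]
      exact mul_nonpos_of_nonneg_of_nonpos (Real.exp_pos _).le (hηle t)
    by_contra hvc
    push_neg at hvc
    have h3 : Real.exp (-(c / 2) * s) * v s ≤ 0 :=
      mul_nonpos_of_nonneg_of_nonpos (Real.exp_pos _).le hvc
    have h1 : w s₀ ≤ w s := hanti hs
    simp only [hw] at h1
    have h2 : 0 < Real.exp (-(c / 2) * s₀) * v s₀ := mul_pos (Real.exp_pos _) hs₀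
    linarith
  ------------------------------------------------------------------
  -- Step 3: tail where u is small
  have hu0 : Tendsto u atBot (nhds 0) := by
    rw [nhds_prod_eq, tendsto_prod_iff'] at hlim
    exact hlim.1
  obtain ⟨T, hT⟩ : ∃ T, ∀ s ≤ T, u s < 1 / (2 * β) :=
    eventually_atBot.mp (hu0.eventually_lt_const (by positivity))
  have hqhalf : ∀ s ≤ T, β * u s * v s / (1 + u s) ≤ v s / 2 := by
    intro s hs
    have h1 : β * u s * v s / (1 + u s) ≤ β * u s * v s :=
      div_le_self (mul_nonneg (mul_nonneg hβ0.le (hnn s).1) (hnn s).2) (by linarith [(hnn s).1])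
    have h2 : β * u s < 1 / 2 := by
      have := mul_lt_mul_of_pos_left (hT s hs) hβ0
      have he : β * (1 / (2 * β)) = 1 / 2 := by field_simp
      linarith [he ▸ this]
    nlinarith [(hnn s).2, mul_le_mul_of_nonneg_right h2.le (hnn s).2]
  ------------------------------------------------------------------
  -- Step 4: ζ := v' - (c + 1/(4c)) v satisfies ζ' ≥ -(1/(4c)) ζ on (-∞, T₀]
  obtain ⟨k, hk⟩ : ∃ k : ℝ, k = c + 1 / (4 * c) := ⟨_, rfl⟩
  have hkpos : 0 < k := by rw [hk]; positivity
  set ζ : ℝ → ℝ := fun s => deriv v s - k * v s with hζ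
  have hζd : Differentiable ℝ ζ := hv'd.sub (hvd.const_mul _)
  have hζderiv : ∀ s, deriv ζ s = deriv (deriv v) s - k * deriv v s := fun s => by
    rw [hζ]
    rw [deriv_fun_sub (hv'd s) ((hvd s).const_mul _), deriv_const_mul _ (hvd s)]
  have hζbd : ∀ s, |ζ s| ≤ M + k * M := fun s => by
    have h1 : |ζ s| ≤ |deriv v s| + |k * v s| := by
      rw [hζ]; exact abs_sub _ _
    have h2 : |k * v s| = k * |v s| := by
      rw [abs_mul, abs_of_pos hkpos]
    nlinarith [hvb s, hv'b s, abs_nonneg (v s)]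
  obtain ⟨T₀, hT₀T, hT₀s₀⟩ : ∃ T₀, T₀ ≤ T ∧ T₀ ≤ s₀ :=
    ⟨min T s₀, min_le_left _ _, min_le_right _ _⟩
  have e1 : 1 / (4 * c) * k = 1 / 4 + 1 / (16 * c ^ 2) := by
    rw [hk]; field_simp; ring
  have e2 : 1 / (16 * c ^ 2) ≤ 1 / 16 := by
    rw [div_le_div_iff₀ (by positivity) (by norm_num)]
    nlinarith
  have hρk : 0 ≤ 1 / 2 - 1 / (4 * c) * k := by rw [e1]; linarith
  have hζineq : ∀ s, s ≤ T₀ → (-(1 / (4 * c))) * ζ s ≤ deriv ζ s := by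
    intro s hs
    rw [hζderiv s, hv'' s]
    simp only [hζ]
    rw [← sub_nonneg]
    have h2 := hqhalf s (le_trans hs hT₀T)
    have h3 := (hnn s).2
    have key : 0 ≤ v s * (1 / 2 - 1 / (4 * c) * k) := mul_nonneg h3 hρk
    have hck : c - k + 1 / (4 * c) = 0 := by rw [hk]; ring
    have e : (c * deriv v s + v s - β * u s * v s / (1 + u s) - k * deriv v s)
        - (-(1 / (4 * c)) * (deriv v s - k * v s))
        = (v s / 2 - β * u s * v s / (1 + u s)) + v s * (1 / 2 - 1 / (4 * c) * k)
          + (c - k + 1 / (4 * c)) * deriv v s := by ring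
    rw [e, hck]
    linarith
  have hneg : (-(1 / (4 * c))) < 0 := by
    have : (0:ℝ) < 1 / (4 * c) := by positivity
    linarith
  have hζT₀ : 0 ≤ ζ T₀ :=
    gron_bwd ζ (-(1 / (4 * c))) (M + k * M) T₀ hneg hζd hζbd hζineq
  ------------------------------------------------------------------
  -- Step 5: contradiction at T₀
  have hvT₀ : 0 < v T₀ := hvpos T₀ hT₀s₀
  have hη0 : deriv v T₀ - c / 2 * v T₀ ≤ 0 := hηle T₀
  have hζ0 : 0 ≤ deriv v T₀ - k * v T₀ := hζT₀
  have hkc : 0 < k - c / 2 := by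
    have : k - c / 2 = c / 2 + 1 / (4 * c) := by rw [hk]; ring
    rw [this]; positivity
  nlinarith [mul_pos hkc hvT₀]
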